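/- Let n ≥ 1, let ψ ∈ ℂ^(2^n) be a unit vector, and let 0 ≤ ε < 1/(1 + 2^(2n−1)). Then for every 2^n × 2^n unitary matrix U, the matrix U (ε ψψ* + (1−ε) 2^{−n} I) U* is a separable n-qubit density matrix. That is, a quantum computation that starts in a pseudo-pure state whose purity parameter satisfies this bound never produces entanglement under unitary evolution. -/

import Mathlib

open Matrix
open scoped ComplexOrder

/-- A density matrix: positive semidefinite with trace 1. -/
def IsDensityMatrix {m : Type} [Fintype m] [DecidableEq m] (ρ : Matrix m m ℂ) : Prop :=
  ρ.PosSemidef ∧ ρ.trace = 1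

/-- An `n`-qubit product state: a tensor (Kronecker) product `ρ₁ ⊗ ⋯ ⊗ ρₙ` of
single-qubit density matrices, expressed entrywise on the index type `Fin n → Fin 2`. -/
def IsProductState (n : ℕ) (ρ : Matrix (Fin n → Fin 2) (Fin n → Fin 2) ℂ) : Prop :=
  ∃ σ : Fin n → Matrix (Fin 2) (Fin 2) ℂ,
    (∀ i, IsDensityMatrix (σ i)) ∧ ∀ x y, ρ x y = ∏ i, σ i (x i) (y i)

/-- An `n`-qubit state is separable if it is a finite convex combination of product states. -/
def IsSeparableState (n : ℕ) (ρ : Matrix (Fin n → Fin 2) (Fin n → Fin 2) ℂ) : Prop :=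
  ∃ (k : ℕ) (p : Fin k → ℝ) (σ : Fin k → Matrix (Fin n → Fin 2) (Fin n → Fin 2) ℂ),
    (∀ j, 0 ≤ p j) ∧ (∑ j, p j = 1) ∧ (∀ j, IsProductState n (σ j)) ∧
      ρ = ∑ j, (p j : ℂ) • σ j


open Complex

noncomputable section

namespace PPS


def sq2 : ℂ := ((Real.sqrt 2)⁻¹ : ℝ)

lemma sq2_sq : sq2 ^ 2 = 1/2 := by
  have h : ((Real.sqrt 2)⁻¹ : ℝ) ^ 2 = 1/2 := by
    rw [inv_pow, Real.sq_sqrt (by norm_num : (0:ℝ) ≤ 2)]; norm_num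
  rw [sq2, ← Complex.ofReal_pow, h]
  norm_num

lemma star_sq2 : (starRingEnd ℂ) sq2 = sq2 := by
  simp [sq2]

def pauli : Fin 4 → Matrix (Fin 2) (Fin 2) ℂ :=
  ![!![1,0;0,1], !![0,1;1,0], !![0,-I;I,0], !![1,0;0,-1]]

def pvec : Fin 4 → Fin 2 → (Fin 2 → ℂ) :=
  ![![![1,0], ![0,1]],
    ![![sq2, sq2], ![sq2, -sq2]],
    ![![sq2, sq2*I], ![sq2, -(sq2*I)]],
    ![![1,0], ![0,1]]]

def proj (j : Fin 4) (s : Fin 2) : Matrix (Fin 2) (Fin 2) ℂ :=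
  vecMulVec (pvec j s) (star (pvec j s))

def sgn1 : Fin 4 → Fin 2 → ℝ := fun j s => if j = 0 then 1 else if s = 0 then 1 else -1

lemma vecMulVec_posSemidef {m : Type} [Fintype m] (v : m → ℂ) :
    (vecMulVec v (star v)).PosSemidef := by
  refine posSemidef_iff_dotProduct_mulVec.mpr ⟨?_, ?_⟩
  · ext i j; simp [vecMulVec, mul_comm]
  · intro x
    have : star x ⬝ᵥ (vecMulVec v (star v) *ᵥ x)
        = (starRingEnd ℂ) (star v ⬝ᵥ x) * (star v ⬝ᵥ x) := by
      simp only [dotProduct, mulVec, vecMulVec_apply, Pi.star_apply, map_sum, _root_.map_mul,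
        Finset.mul_sum, Finset.sum_mul]
      rw [Finset.sum_comm]
      apply Finset.sum_congr rfl; intro i _
      apply Finset.sum_congr rfl; intro j _
      simp [RingHomCompTriple.comp_apply, Complex.conj_conj]
      ring
    rw [this, Complex.conj_mul']
    positivity

lemma proj_trace (j : Fin 4) (s : Fin 2) : (proj j s).trace = 1 := by
  fin_cases j <;> fin_cases s <;>
    simp [proj, trace, pvec, vecMulVec, Fin.sum_univ_two, star_sq2, _root_.map_mul,
      Complex.conj_I] <;>
    ring_nf <;> simp [sq2_sq, Complex.I_sq] <;> try ring

lemma proj_dm (j : Fin 4) (s : Fin 2) : IsDensityMatrix (proj j s) :=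
  ⟨vecMulVec_posSemidef _, proj_trace j s⟩

lemma pauli_eq_proj (j : Fin 4) (a b : Fin 2) :
    pauli j a b = ∑ s : Fin 2, (sgn1 j s : ℂ) * proj j s a b := by
  fin_cases j <;> fin_cases a <;> fin_cases b <;>
    simp [pauli, proj, pvec, sgn1, vecMulVec, Fin.sum_univ_two, star_sq2, _root_.map_mul,
      Complex.conj_I] <;>
    ring_nf <;> simp [sq2_sq, Complex.I_sq] <;> try ring

lemma proj_sum (j : Fin 4) (a b : Fin 2) :
    ∑ s : Fin 2, proj j s a b = if a = b then 1 else 0 := by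
  fin_cases j <;> fin_cases a <;> fin_cases b <;>
    simp [proj, pvec, vecMulVec, Fin.sum_univ_two, star_sq2, _root_.map_mul, Complex.conj_I] <;>
    ring_nf <;> simp [sq2_sq, Complex.I_sq] <;> try ring

lemma pauli_complete (a b c d : Fin 2) :
    ∑ j : Fin 4, pauli j a b * pauli j c d
      = 2 * (if a = d then 1 else 0) * (if b = c then 1 else 0) := by
  fin_cases a <;> fin_cases b <;> fin_cases c <;> fin_cases d <;>
    simp [pauli, Fin.sum_univ_four] <;> ring_nf <;> try simp [Complex.I_sq]

lemma pauli_herm (j : Fin 4) (a b : Fin 2) :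
    (starRingEnd ℂ) (pauli j a b) = pauli j b a := by
  fin_cases j <;> fin_cases a <;> fin_cases b <;> simp [pauli]



lemma pauli_zero (a b : Fin 2)  : pauli 0 a b = if a = b then 1 else 0 := by
  fin_cases a <;> fin_cases b <;> simp [pauli]

variable {n : ℕ}

def PSa (α : Fin n → Fin 4) : Matrix (Fin n → Fin 2) (Fin n → Fin 2) ℂ :=
  fun x y => ∏ i, pauli (α i) (x i) (y i)

def PP (α : Fin n → Fin 4) (s : Fin n → Fin 2) : Matrix (Fin n → Fin 2) (Fin n → Fin 2) ℂ :=
  fun x y => ∏ i, proj (α i) (s i) (x i) (y i)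

lemma PP_def2 {n : ℕ} (α : Fin n → Fin 4) (s : Fin n → Fin 2) (x y : Fin n → Fin 2) :
    PP α s x y = ∏ i, proj (α i) (s i) (x i) (y i) := rfl

def sgn (α : Fin n → Fin 4) (s : Fin n → Fin 2) : ℝ := ∏ i, sgn1 (α i) (s i)

lemma PP_trace (α : Fin n → Fin 4) (s : Fin n → Fin 2) : (PP α s).trace = 1 := by
  unfold trace PP diag
  simp only
  rw [show (∑ x : Fin n → Fin 2, ∏ i, proj (α i) (s i) (x i) (x i))
      = ∏ i, ∑ t : Fin 2, proj (α i) (s i) t t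
      from (Fintype.prod_sum (fun i t => proj (α i) (s i) t t)).symm]
  simp only [show ∀ j sg, ∑ t : Fin 2, proj j sg t t = 1 from fun j sg => proj_trace j sg]
  simp

lemma PP_sum (α : Fin n → Fin 4) : ∑ s : Fin n → Fin 2, PP α s = 1 := by
  ext x y
  rw [Matrix.sum_apply]
  unfold PP
  rw [show (∑ c : Fin n → Fin 2, ∏ i, proj (α i) (c i) (x i) (y i))
      = ∏ i, ∑ t : Fin 2, proj (α i) t (x i) (y i)
      from (Fintype.prod_sum (fun i t => proj (α i) t (x i) (y i))).symm]
  simp only [proj_sum]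
  rw [Finset.prod_boole, Matrix.one_apply]
  congr 1
  simp [funext_iff]

lemma PP_signed_sum (α : Fin n → Fin 4) :
    ∑ s : Fin n → Fin 2, ((sgn α s : ℝ) : ℂ) • PP α s = PSa α := by
  ext x y
  rw [Matrix.sum_apply]
  unfold PP PSa sgn
  change ∑ c : Fin n → Fin 2, (((∏ i, sgn1 (α i) (c i) : ℝ) : ℂ) * ∏ i, proj (α i) (c i) (x i) (y i)) = ∏ i, pauli (α i) (x i) (y i)
  push_cast
  simp only [← Finset.prod_mul_distrib]
  rw [show (∑ s : Fin n → Fin 2, ∏ i, ((sgn1 (α i) (s i) : ℝ) : ℂ) * proj (α i) (s i) (x i) (y i))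
      = ∏ i, ∑ t : Fin 2, ((sgn1 (α i) t : ℝ) : ℂ) * proj (α i) t (x i) (y i)
      from (Fintype.prod_sum (fun i t => ((sgn1 (α i) t : ℝ) : ℂ) * proj (α i) t (x i) (y i))).symm]
  exact Finset.prod_congr rfl fun i _ => (pauli_eq_proj (α i) (x i) (y i)).symm

lemma PSa_complete (x y u v : Fin n → Fin 2) :
    ∑ α : Fin n → Fin 4, PSa α x y * PSa α u v
      = 2^n * (if x = v then 1 else 0) * (if y = u then 1 else 0) := by
  unfold PSa
  simp only [← Finset.prod_mul_distrib]
  rw [show (∑ α : Fin n → Fin 4, ∏ i, pauli (α i) (x i) (y i) * pauli (α i) (u i) (v i))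
      = ∏ i, ∑ j : Fin 4, pauli j (x i) (y i) * pauli j (u i) (v i)
      from (Fintype.prod_sum (fun i j => pauli j (x i) (y i) * pauli j (u i) (v i))).symm]
  simp only [pauli_complete]
  rw [Finset.prod_mul_distrib, Finset.prod_mul_distrib, Finset.prod_boole, Finset.prod_boole]
  simp [funext_iff]

lemma PSa_herm (α : Fin n → Fin 4) (x y : Fin n → Fin 2) :
    (starRingEnd ℂ) (PSa α x y) = PSa α y x := by
  unfold PSa
  rw [map_prod]
  exact Finset.prod_congr rfl fun i _ => pauli_herm (α i) (x i) (y i)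

lemma PSa_zero : (PSa (0 : Fin n → Fin 4)) = 1 := by
  ext x y
  unfold PSa
  simp only [Pi.zero_apply, pauli_zero]
  rw [Finset.prod_boole, Matrix.one_apply]
  congr 1
  simp [funext_iff]

def coef (ρ : Matrix (Fin n → Fin 2) (Fin n → Fin 2) ℂ) (α : Fin n → Fin 4) : ℂ :=
  ∑ x, ∑ y, ρ x y * PSa α y x

lemma coef_expansion (ρ : Matrix (Fin n → Fin 2) (Fin n → Fin 2) ℂ) :
    ∑ α : Fin n → Fin 4, coef ρ α • PSa α = ((2:ℂ)^n) • ρ := by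
  ext x y
  rw [Matrix.sum_apply]
  simp only [Matrix.smul_apply, smul_eq_mul, coef, Finset.sum_mul]
  rw [Finset.sum_comm]
  have : ∀ u, ∑ α : Fin n → Fin 4, ∑ v, ρ u v * PSa α v u * PSa α x y
      = ∑ v, ρ u v * (2^n * (if v = y then 1 else 0) * (if u = x then 1 else 0)) := by
    intro u
    rw [Finset.sum_comm]
    refine Finset.sum_congr rfl fun v _ => ?_
    simp only [mul_assoc, ← Finset.mul_sum, PSa_complete]
  simp only [this]
  simp [mul_ite, ite_mul, Finset.sum_ite_eq', mul_comm]




variable {n : ℕ}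


/-! ## Auxiliary facts -/

lemma abs_sgn (α : Fin n → Fin 4) (s : Fin n → Fin 2) : |sgn α s| = 1 := by
  unfold sgn
  rw [Finset.abs_prod]
  refine Finset.prod_eq_one fun i _ => ?_
  unfold sgn1
  split_ifs <;> norm_num

lemma ofReal_smul_posSemidef {m : Type} [Fintype m] [DecidableEq m]
    {A : Matrix m m ℂ} (hA : A.PosSemidef) {c : ℝ} (hc : 0 ≤ c) :
    (((c : ℝ) : ℂ) • A).PosSemidef := by
  refine posSemidef_iff_dotProduct_mulVec.mpr ⟨?_, ?_⟩
  · rw [IsHermitian, conjTranspose_smul, hA.1.eq]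
    congr 1
    simp
  · intro x
    rw [smul_mulVec, dotProduct_smul, smul_eq_mul]
    have h := hA.dotProduct_mulVec_nonneg x
    rw [Complex.nonneg_iff] at h ⊢
    refine ⟨by simpa using mul_nonneg hc h.1, by simp [← h.2]⟩

lemma conj_vecMulVec {m : Type} [Fintype m] (U : Matrix m m ℂ) (ψ : m → ℂ) :
    U * vecMulVec ψ (star ψ) * Uᴴ = vecMulVec (U *ᵥ ψ) (star (U *ᵥ ψ)) := by
  rw [vecMulVec_eq Unit, vecMulVec_eq Unit, star_mulVec, replicateCol_mulVec, replicateRow_vecMul]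
  simp only [Matrix.mul_assoc]

lemma sum_mul_conj_self {m : Type} [Fintype m] (φ : m → ℂ) :
    ∑ x, φ x * (starRingEnd ℂ) (φ x) = ((∑ x, ‖φ x‖^2 : ℝ) : ℂ) := by
  push_cast
  refine Finset.sum_congr rfl fun x _ => ?_
  rw [Complex.mul_conj]
  norm_cast
  rw [Complex.normSq_eq_norm_sq]

lemma trace_vecMulVec {m : Type} [Fintype m] [DecidableEq m] (φ : m → ℂ) :
    (vecMulVec φ (star φ)).trace = ((∑ x, ‖φ x‖^2 : ℝ) : ℂ) := by
  rw [← sum_mul_conj_self φ]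
  unfold trace diag
  exact Finset.sum_congr rfl fun x _ => rfl

lemma trace_vecMulVec_sq {m : Type} [Fintype m] [DecidableEq m] (φ : m → ℂ) :
    (vecMulVec φ (star φ) * vecMulVec φ (star φ)).trace = ((∑ x, ‖φ x‖^2 : ℝ) : ℂ)^2 := by
  rw [← sum_mul_conj_self φ]
  unfold trace diag
  simp only [mul_apply, vecMulVec_apply, Pi.star_apply]
  rw [pow_two, Finset.sum_mul]
  refine Finset.sum_congr rfl fun x _ => ?_
  rw [Finset.mul_sum]
  refine Finset.sum_congr rfl fun y _ => ?_
  simp only [Complex.star_def]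
  ring

lemma bound_aux (n : ℕ) (hn : 1 ≤ n) :
    ((4:ℝ)^n - 1) * ((2:ℝ)^n - 1) ≤ 2^(2*n-1) * 2^(2*n-1) := by
  rw [← pow_add]
  have h4 : (4:ℝ)^n = 2^(2*n) := by
    rw [show (4:ℝ) = 2^2 by norm_num, ← pow_mul]
  rcases Nat.lt_or_ge n 2 with h | h
  · interval_cases n
    · norm_num
  · have he : (2*n-1)+(2*n-1) = 3*n + (n - 2) := by omega
    rw [he, h4]
    have h1 : (2:ℝ)^(2*n) - 1 ≤ 2^(2*n) := by linarith
    have h2 : (2:ℝ)^n - 1 ≤ 2^n := by linarith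
    have h2n : (0:ℝ) ≤ (2:ℝ)^n - 1 := by
      have : (1:ℝ) ≤ 2^n := one_le_pow₀ (by norm_num)
      linarith
    calc ((2:ℝ)^(2*n) - 1) * ((2:ℝ)^n - 1) ≤ 2^(2*n) * 2^n := by
          apply mul_le_mul h1 h2 h2n (by positivity)
      _ = 2^(3*n) := by rw [← pow_add]; ring_nf
      _ ≤ 2^(3*n + (n-2)) := by
          apply pow_le_pow_right₀ (by norm_num)
          omega

/-! ## Main lemma -/

theorem main (n : ℕ) (hn : 1 ≤ n) (φ : (Fin n → Fin 2) → ℂ)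
    (hφ : ∑ x, ‖φ x‖ ^ 2 = 1) (ε : ℝ) (hε0 : 0 ≤ ε)
    (hε : ε < 1 / (1 + 2 ^ (2 * n - 1))) :
    IsDensityMatrix ((ε : ℂ) • vecMulVec φ (star φ) + (((1 - ε) / 2 ^ n : ℝ) : ℂ) • 1) ∧
    IsSeparableState n ((ε : ℂ) • vecMulVec φ (star φ) + (((1 - ε) / 2 ^ n : ℝ) : ℂ) • 1) := by
  have hX : (0:ℝ) < 2 ^ (2*n-1) := by positivity
  have hεX : ε * 2^(2*n-1) < 1 - ε := by
    have h1 : ε * (1 + 2^(2*n-1)) < 1 :=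
      (lt_div_iff₀ (by linarith : (0:ℝ) < 1 + 2^(2*n-1))).mp hε
    nlinarith
  have hε1 : ε < 1 := by nlinarith
  set ρ₁ := vecMulVec φ (star φ) with hρ₁
  have hcard2 : Fintype.card (Fin n → Fin 2) = 2^n := by simp
  have hcard4 : Fintype.card (Fin n → Fin 4) = 4^n := by simp
  -- trace of the state
  have htr : ((ε : ℂ) • ρ₁ + (((1 - ε) / 2 ^ n : ℝ) : ℂ) • 1).trace = 1 := by
    rw [trace_add, trace_smul, trace_smul, trace_one, trace_vecMulVec, hφ, hcard2]
    push_cast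
    simp only [smul_eq_mul]
    field_simp
    ring
  have hden : IsDensityMatrix ((ε : ℂ) • ρ₁ + (((1 - ε) / 2 ^ n : ℝ) : ℂ) • 1) := by
    refine ⟨PosSemidef.add ?_ ?_, htr⟩
    · exact ofReal_smul_posSemidef (vecMulVec_posSemidef φ) hε0
    · exact ofReal_smul_posSemidef Matrix.PosSemidef.one
        (div_nonneg (by linarith) (by positivity) : (0:ℝ) ≤ (1-ε)/2^n)
  refine ⟨hden, ?_⟩
  -- real coefficients
  set r : (Fin n → Fin 4) → ℝ := fun α => (coef ρ₁ α).re with hr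
  have hconj : ∀ α, (starRingEnd ℂ) (coef ρ₁ α) = coef ρ₁ α := by
    intro α
    unfold coef
    simp only [map_sum, _root_.map_mul, PSa_herm]
    rw [Finset.sum_comm]
    refine Finset.sum_congr rfl fun x _ => Finset.sum_congr rfl fun y _ => ?_
    congr 1
    simp only [hρ₁, vecMulVec_apply, Pi.star_apply, _root_.map_mul, Complex.star_def,
      Complex.conj_conj]
    ring
  have hcreal : ∀ α, ((r α : ℝ) : ℂ) = coef ρ₁ α := fun α =>
    Complex.conj_eq_iff_re.mp (hconj α)
  have hc0 : coef ρ₁ 0 = 1 := by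
    unfold coef
    rw [PSa_zero]
    have h1 : ∀ x y : Fin n → Fin 2,
        ρ₁ x y * (1 : Matrix (Fin n → Fin 2) (Fin n → Fin 2) ℂ) y x
          = if y = x then ρ₁ x y else 0 := by
      intro x y
      rw [Matrix.one_apply]
      split_ifs with h
      · subst h; simp
      · simp
    simp only [h1, Finset.sum_ite_eq', Finset.mem_univ, if_true]
    have h2 := trace_vecMulVec φ
    rw [hφ] at h2
    simpa [trace, diag] using h2
  have hr0 : r 0 = 1 := by
    have := hcreal 0
    rw [hc0] at this
    exact_mod_cast this
  -- sum of squares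
  have hent : ∀ y x, ∑ α : Fin n → Fin 4, coef ρ₁ α * PSa α y x = 2^n * ρ₁ y x := by
    intro y x
    have h := coef_expansion ρ₁
    have h2 := Matrix.ext_iff.mpr h y x
    simpa [Matrix.sum_apply, Matrix.smul_apply, smul_eq_mul] using h2
  have hsumsq : ∑ α : Fin n → Fin 4, coef ρ₁ α ^ 2 = 2^n := by
    calc ∑ α : Fin n → Fin 4, coef ρ₁ α ^ 2
        = ∑ α : Fin n → Fin 4, ∑ x, ∑ y, coef ρ₁ α * (ρ₁ x y * PSa α y x) := by
          refine Finset.sum_congr rfl fun α _ => ?_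
          have hc : coef ρ₁ α = ∑ x, ∑ y, ρ₁ x y * PSa α y x := rfl
          rw [pow_two]
          conv_lhs => rw [hc]
          rw [Finset.sum_mul]
          refine Finset.sum_congr rfl fun x _ => ?_
          rw [Finset.sum_mul]
          refine Finset.sum_congr rfl fun y _ => ?_
          rw [← hc]
          ring
      _ = ∑ x, ∑ y, ρ₁ x y * (∑ α : Fin n → Fin 4, coef ρ₁ α * PSa α y x) := by
          rw [Finset.sum_comm]
          refine Finset.sum_congr rfl fun x _ => ?_
          rw [Finset.sum_comm]
          refine Finset.sum_congr rfl fun y _ => ?_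
          rw [Finset.mul_sum]
          exact Finset.sum_congr rfl fun α _ => by ring
      _ = ∑ x, ∑ y, ρ₁ x y * (2^n * ρ₁ y x) := by
          simp only [hent]
      _ = 2^n * (ρ₁ * ρ₁).trace := by
          unfold trace diag
          rw [Finset.mul_sum]
          refine Finset.sum_congr rfl fun x _ => ?_
          rw [mul_apply, Finset.mul_sum]
          exact Finset.sum_congr rfl fun y _ => by ring
      _ = 2^n := by
          rw [hρ₁, trace_vecMulVec_sq, hφ]
          norm_num
  have hrsq : ∑ α : Fin n → Fin 4, r α ^ 2 = 2^n := by
    have : ((∑ α : Fin n → Fin 4, r α ^ 2 : ℝ) : ℂ) = ((2^n : ℝ) : ℂ) := by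
      push_cast
      calc ∑ α : Fin n → Fin 4, ((r α : ℝ):ℂ) ^ 2
          = ∑ α : Fin n → Fin 4, coef ρ₁ α ^ 2 :=
            Finset.sum_congr rfl fun α _ => by rw [hcreal]
        _ = 2^n := hsumsq
        _ = ((2:ℂ))^n := by norm_num
    exact_mod_cast this
  -- the total negative weight
  set T : ℝ := ∑ α ∈ Finset.univ.erase (0 : Fin n → Fin 4), |r α| with hTdef
  have hT0 : 0 ≤ T := Finset.sum_nonneg fun α _ => abs_nonneg _
  have hTle : T ≤ 2^(2*n-1) := by
    have hcs : T^2 ≤ ((4:ℝ)^n - 1) * ((2:ℝ)^n - 1) := by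
      have h1 : T^2 ≤ (Finset.univ.erase (0 : Fin n → Fin 4)).card *
          ∑ α ∈ Finset.univ.erase (0 : Fin n → Fin 4), |r α| ^ 2 := by
        exact sq_sum_le_card_mul_sum_sq
      have hcar : ((Finset.univ.erase (0 : Fin n → Fin 4)).card : ℝ) = 4^n - 1 := by
        rw [Finset.card_erase_of_mem (Finset.mem_univ _), Finset.card_univ, hcard4]
        have : 1 ≤ 4^n := Nat.one_le_pow _ _ (by norm_num)
        push_cast [this]
        ring
      have hsum : ∑ α ∈ Finset.univ.erase (0 : Fin n → Fin 4), |r α| ^ 2 = 2^n - 1 := by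
        have h2 : ∑ α ∈ Finset.univ.erase (0 : Fin n → Fin 4), |r α| ^ 2
            = ∑ α ∈ Finset.univ.erase (0 : Fin n → Fin 4), r α ^ 2 := by
          exact Finset.sum_congr rfl fun α _ => sq_abs _
        rw [h2, Finset.sum_erase_eq_sub (Finset.mem_univ _), hrsq, hr0]
        norm_num
      rw [hcar, hsum] at h1
      exact h1
    nlinarith [bound_aux n hn, hX, hT0]
  have hεT : ε * T ≤ 1 := by
    have h1 : ε * T ≤ ε * 2^(2*n-1) := mul_le_mul_of_nonneg_left hTle hε0
    linarith
  -- the weights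
  set w : (Fin n → Fin 4) × (Fin n → Fin 2) → ℝ :=
    fun p => if p.1 = 0 then (1 - ε*T)/2^n
             else ε/2^n * (r p.1 * sgn p.1 p.2 + |r p.1|) with hwdef
  have hw0 : ∀ p, 0 ≤ w p := by
    intro p
    rw [hwdef]
    dsimp only
    split_ifs with h
    · have : (0:ℝ) ≤ 1 - ε*T := by linarith
      positivity
    · have h1 : -(|r p.1|) ≤ r p.1 * sgn p.1 p.2 := by
        have := neg_abs_le (r p.1 * sgn p.1 p.2)
        rw [abs_mul, abs_sgn, mul_one] at this
        exact this
      have h2 : (0:ℝ) ≤ r p.1 * sgn p.1 p.2 + |r p.1| := by linarith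
      positivity
  -- the decomposition
  have hdecomp : (ε : ℂ) • ρ₁ + (((1 - ε) / 2 ^ n : ℝ) : ℂ) • 1
      = ∑ p : (Fin n → Fin 4) × (Fin n → Fin 2), ((w p : ℝ) : ℂ) • PP p.1 p.2 := by
    rw [Fintype.sum_prod_type]
    rw [← Finset.add_sum_erase _ _ (Finset.mem_univ (0 : Fin n → Fin 4))]
    have h0 : ∑ s : Fin n → Fin 2, ((w (0, s) : ℝ) : ℂ) • PP 0 s
        = (((1 - ε*T)/2^n : ℝ) : ℂ) • (1 : Matrix (Fin n → Fin 2) (Fin n → Fin 2) ℂ) := by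
      rw [← PP_sum (0 : Fin n → Fin 4), Finset.smul_sum]
      refine Finset.sum_congr rfl fun s _ => ?_
      rw [hwdef]
      norm_num
    have hA : ∀ α ∈ Finset.univ.erase (0 : Fin n → Fin 4),
        ∑ s : Fin n → Fin 2, ((w (α, s) : ℝ) : ℂ) • PP α s
          = ((ε/2^n * r α : ℝ) : ℂ) • PSa α
            + ((ε/2^n * |r α| : ℝ) : ℂ) • (1 : Matrix (Fin n → Fin 2) (Fin n → Fin 2) ℂ) := by
      intro α hα
      rw [Finset.mem_erase] at hα
      have hstep : ∀ s : Fin n → Fin 2, ((w (α, s) : ℝ) : ℂ) • PP α s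
          = ((ε/2^n * r α : ℝ) : ℂ) • (((sgn α s : ℝ) : ℂ) • PP α s)
            + ((ε/2^n * |r α| : ℝ) : ℂ) • PP α s := by
        intro s
        rw [hwdef]
        dsimp only
        rw [if_neg hα.1, smul_smul, ← add_smul]
        congr 1
        push_cast
        ring
      rw [Finset.sum_congr rfl fun s _ => hstep s, Finset.sum_add_distrib,
        ← Finset.smul_sum, ← Finset.smul_sum, PP_signed_sum, PP_sum]
    rw [Finset.sum_congr rfl hA, h0, Finset.sum_add_distrib, ← Finset.sum_smul]
    have hB : ∑ α ∈ Finset.univ.erase (0 : Fin n → Fin 4), ((ε/2^n * r α : ℝ) : ℂ) • PSa α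
        = ((ε/2^n : ℝ) : ℂ) • (((2:ℂ)^n) • ρ₁ - 1) := by
      have h1 : ∀ α, ((ε/2^n * r α : ℝ) : ℂ) • PSa α
          = ((ε/2^n : ℝ) : ℂ) • (((r α : ℝ) : ℂ) • PSa α) := by
        intro α
        rw [smul_smul]
        congr 1
        push_cast
        ring
      rw [Finset.sum_congr rfl fun α _ => h1 α, ← Finset.smul_sum]
      congr 1
      rw [Finset.sum_erase_eq_sub (Finset.mem_univ _)]
      have h2 : ∑ α : Fin n → Fin 4, ((r α : ℝ) : ℂ) • PSa α = ((2:ℂ)^n) • ρ₁ := by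
        rw [← coef_expansion ρ₁]
        exact Finset.sum_congr rfl fun α _ => by rw [hcreal]
      rw [h2, hr0, PSa_zero]
      norm_num
    have hC : (∑ α ∈ Finset.univ.erase (0 : Fin n → Fin 4), ((ε/2^n * |r α| : ℝ) : ℂ))
        = ((ε/2^n * T : ℝ) : ℂ) := by
      rw [hTdef]
      push_cast
      rw [Finset.mul_sum]
    rw [hB, hC]
    -- now pure linear algebra over ℂ
    have h2n : ((2:ℂ))^n ≠ 0 := by positivity
    rw [smul_sub, smul_smul]
    push_cast
    match_scalars
    · field_simp
    · field_simp
      ring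
  -- total weight is 1
  have hwsum : ∑ p : (Fin n → Fin 4) × (Fin n → Fin 2), w p = 1 := by
    have h1 := congrArg trace hdecomp
    rw [htr, trace_sum] at h1
    simp only [trace_smul, PP_trace, smul_eq_mul, mul_one] at h1
    have : ((∑ p : (Fin n → Fin 4) × (Fin n → Fin 2), w p : ℝ) : ℂ) = 1 := by
      push_cast
      exact h1.symm
    exact_mod_cast this
  -- package
  set e := Fintype.equivFin ((Fin n → Fin 4) × (Fin n → Fin 2)) with he
  refine ⟨Fintype.card ((Fin n → Fin 4) × (Fin n → Fin 2)),
    fun j => w (e.symm j), fun j => PP (e.symm j).1 (e.symm j).2,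
    fun j => hw0 _, ?_, ?_, ?_⟩
  · rw [Equiv.sum_comp e.symm (fun p => w p)]
    exact hwsum
  · intro j
    exact ⟨fun i => proj ((e.symm j).1 i) ((e.symm j).2 i),
      fun i => proj_dm _ _, fun x y => PP_def2 _ _ x y⟩
  · rw [Equiv.sum_comp e.symm (fun p => ((w p : ℝ) : ℂ) • PP p.1 p.2)]
    exact hdecomp


end PPS

open PPS

/-- A unitary computation starting from a pseudo-pure state whose purity parameter
satisfies `ε < 1/(1 + 2^(2n-1))` never produces entanglement: the evolved state
`U (ε ψψ* + (1-ε) 2^{-n} I) U*` is always a separable `n`-qubit density matrix. -/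
theorem pps_unitary_evolution_separable (n : ℕ) (hn : 1 ≤ n)
    (ψ : (Fin n → Fin 2) → ℂ) (hψ : ∑ x, ‖ψ x‖ ^ 2 = 1) (ε : ℝ) (hε0 : 0 ≤ ε)
    (hε : ε < 1 / (1 + 2 ^ (2 * n - 1)))
    (U : Matrix (Fin n → Fin 2) (Fin n → Fin 2) ℂ) (hU : U * Uᴴ = 1) :
    IsDensityMatrix
      (U * ((ε : ℂ) • vecMulVec ψ (star ψ) + (((1 - ε) / 2 ^ n : ℝ) : ℂ) • 1) * Uᴴ) ∧
    IsSeparableState n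
      (U * ((ε : ℂ) • vecMulVec ψ (star ψ) + (((1 - ε) / 2 ^ n : ℝ) : ℂ) • 1) * Uᴴ) := by
  have hU' : Uᴴ * U = 1 := mul_eq_one_comm.mp hU
  set φ := U *ᵥ ψ with hφdef
  have hφ : ∑ x, ‖φ x‖ ^ 2 = 1 := by
    have key : ∑ x, φ x * (starRingEnd ℂ) (φ x) = ∑ x, ψ x * (starRingEnd ℂ) (ψ x) := by
      have h1 : star φ ⬝ᵥ φ = star ψ ⬝ᵥ ψ := by
        rw [hφdef, star_mulVec, ← dotProduct_mulVec, mulVec_mulVec, hU', one_mulVec]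
      have h2 : ∀ (v : (Fin n → Fin 2) → ℂ), star v ⬝ᵥ v = ∑ x, v x * (starRingEnd ℂ) (v x) := by
        intro v
        unfold dotProduct
        exact Finset.sum_congr rfl fun x _ => by simp [mul_comm, Complex.star_def]
      rw [h2, h2] at h1
      exact h1
    rw [sum_mul_conj_self, sum_mul_conj_self, hψ] at key
    exact_mod_cast key
  have hform : U * ((ε : ℂ) • vecMulVec ψ (star ψ) + (((1 - ε) / 2 ^ n : ℝ) : ℂ) • 1) * Uᴴ
      = (ε : ℂ) • vecMulVec φ (star φ) + (((1 - ε) / 2 ^ n : ℝ) : ℂ) • 1 := by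
    rw [Matrix.mul_add, Matrix.add_mul, Matrix.mul_smul, Matrix.smul_mul,
      Matrix.mul_smul, Matrix.smul_mul, conj_vecMulVec U ψ, Matrix.mul_one, hU]
  rw [hform]
  exact PPS.main n hn φ hφ ε hε0 hε

end
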